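/- Let R be a commutative ring equipped with a power structure (a_n)_{n≥0}, let u ∈ R satisfy a_n(u) = u^n for all n ≥ 0, and set H := 1 + u ∈ R. Then for all natural numbers l ≥ 1 and n ≥ 0, one has a_n(-(l·H)) = (-1)^n · Σ_{i=0}^{n} binomial(l, i)·binomial(l, n-i)·u^{n-i} in R. -/

import Mathlib

open PowerSeries Finset

private lemma aux_coeff {R : Type*} [CommRing R] (c : R) (l i : ℕ) :
    (PowerSeries.coeff (R := R) i) ((1 - PowerSeries.C (R := R) c * PowerSeries.X) ^ l)
      = (-c) ^ i * (l.choose i : R) := by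
  have h : (1 - PowerSeries.C (R := R) c * PowerSeries.X) = (PowerSeries.C (R := R) (-c) * PowerSeries.X + 1) := by
    simp; ring
  rw [h, add_pow]
  simp only [one_pow, mul_one, mul_pow, ← map_pow, map_sum]
  have hterm : ∀ k ∈ Finset.range (l+1),
      (PowerSeries.coeff (R := R) i) (PowerSeries.C (R := R) ((-c)^k) * PowerSeries.X ^ k * (l.choose k : PowerSeries R))
      = if i = k then (-c)^i * (l.choose i : R) else 0 := by
    intro k _
    rw [← map_natCast (PowerSeries.C (R := R)) (l.choose k), mul_right_comm, ← map_mul,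
      PowerSeries.coeff_C_mul, PowerSeries.coeff_X_pow]
    by_cases hk : i = k <;> simp [hk]
  rw [Finset.sum_congr rfl hterm, Finset.sum_ite_eq (Finset.range (l+1)) i]
  by_cases hi : i ∈ Finset.range (l+1)
  · simp [hi]
  · simp only [hi, if_neg, if_false]
    have : l.choose i = 0 := Nat.choose_eq_zero_of_lt (by simpa using Nat.lt_of_succ_le (by simpa [Finset.mem_range] using hi))
    simp [this]


/-- Let `R` be a commutative ring equipped with a power structure
`(a n)_{n ≥ 0}`, let `u ∈ R` satisfy `a n u = u ^ n` for all `n ≥ 0`, and set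
`H := 1 + u`.  Then for all natural numbers `l ≥ 1` and `n ≥ 0`, one has
`a n (-(l • H)) = (-1)^n * ∑_{i=0}^{n} C(l, i) * C(l, n - i) * u^(n - i)` in `R`. -/
theorem power_structure_neg_hyperbolic {R : Type*} [CommRing R]
    (a : ℕ → R → R)
    (h0 : ∀ r : R, a 0 r = 1)
    (h1 : ∀ r : R, a 1 r = r)
    (hzero : ∀ n : ℕ, 1 ≤ n → a n 0 = 0)
    (hone : ∀ n : ℕ, 1 ≤ n → a n 1 = 1)
    (hadd : ∀ (r s : R) (n : ℕ),
      a n (r + s) = ∑ i ∈ Finset.range (n + 1), a i r * a (n - i) s)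
    (u : R) (hu : ∀ n : ℕ, a n u = u ^ n)
    (H : R) (hH : H = 1 + u)
    (l : ℕ) (hl : 1 ≤ l) (n : ℕ) :
    a n (-(l • H)) =
      (-1 : R) ^ n *
        ∑ i ∈ Finset.range (n + 1),
          (l.choose i : R) * (l.choose (n - i) : R) * u ^ (n - i) := by
  classical
  set A : R → PowerSeries R := fun x => PowerSeries.mk (fun k => a k x) with hA
  -- multiplicativity
  have hmul : ∀ r s : R, A (r + s) = A r * A s := by
    intro r s
    ext k
    rw [PowerSeries.coeff_mul, Finset.Nat.sum_antidiagonal_eq_sum_range_succ_mk]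
    simp [hA, hadd]
  have hA0 : A 0 = 1 := by
    ext k
    cases k with
    | zero => simp [hA, h0]
    | succ m => simp [hA, hzero (m+1) (Nat.succ_le_succ (Nat.zero_le m)), PowerSeries.coeff_one]
  -- A 1 * (1 - X) = 1
  have hA1 : A 1 * (1 - PowerSeries.C (R := R) 1 * PowerSeries.X) = 1 := by
    have hco : ∀ k, a k (1 : R) = 1 := by
      intro k
      cases k with
      | zero => exact h0 1
      | succ m => exact hone (m+1) (Nat.succ_le_succ (Nat.zero_le m))
    ext k
    rw [mul_sub, mul_one]
    cases k with
    | zero => simp [hA, hco]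
    | succ m =>
      rw [map_sub]
      have : PowerSeries.C (R := R) 1 * PowerSeries.X = PowerSeries.X := by simp
      rw [this, mul_comm (A 1) PowerSeries.X, PowerSeries.coeff_succ_X_mul]
      simp [hA, hco, PowerSeries.coeff_one]
  have hAu : A u * (1 - PowerSeries.C (R := R) u * PowerSeries.X) = 1 := by
    ext k
    rw [mul_sub, mul_one, map_sub]
    cases k with
    | zero => simp [hA, hu]
    | succ m =>
      rw [mul_comm (PowerSeries.C (R := R) u) PowerSeries.X, ← mul_assoc,
        mul_comm (A u) PowerSeries.X, mul_assoc, PowerSeries.coeff_succ_X_mul,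
        mul_comm (A u) (PowerSeries.C (R := R) u), PowerSeries.coeff_C_mul]
      simp [hA, hu, PowerSeries.coeff_one, pow_succ, mul_comm]
  -- A (l • H) * ((1-X)(1-uX))^l = 1
  set P : PowerSeries R := (1 - PowerSeries.C (R := R) 1 * PowerSeries.X) * (1 - PowerSeries.C (R := R) u * PowerSeries.X) with hP
  have hAH : A H * P = 1 := by
    rw [hH, hmul, hP]
    calc A 1 * A u * ((1 - PowerSeries.C (R := R) 1 * PowerSeries.X) * (1 - PowerSeries.C (R := R) u * PowerSeries.X))
        = (A 1 * (1 - PowerSeries.C (R := R) 1 * PowerSeries.X)) * (A u * (1 - PowerSeries.C (R := R) u * PowerSeries.X)) := by ring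
      _ = 1 := by rw [hA1, hAu, one_mul]
  have hAl : ∀ m : ℕ, A (m • H) * P ^ m = 1 := by
    intro m
    induction m with
    | zero => simpa using hA0
    | succ k ih =>
      have : (k+1) • H = k • H + H := by rw [add_smul, one_smul]
      rw [this, hmul, pow_succ]
      calc A (k • H) * A H * (P ^ k * P)
          = (A (k • H) * P ^ k) * (A H * P) := by ring
        _ = 1 := by rw [ih, hAH, one_mul]
  -- A (-(l•H)) = P ^ l
  have hinv : A (-(l • H)) * A (l • H) = 1 := by
    rw [← hmul, neg_add_cancel, hA0]
  have hkey : A (-(l • H)) = P ^ l := by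
    calc A (-(l • H)) = A (-(l • H)) * (A (l • H) * P ^ l) := by rw [hAl l, mul_one]
      _ = (A (-(l • H)) * A (l • H)) * P ^ l := by ring
      _ = P ^ l := by rw [hinv, one_mul]
  -- now take coefficients
  have hcoeff : a n (-(l • H)) = PowerSeries.coeff (R := R) n (P ^ l) := by
    rw [← hkey]; simp [hA]
  rw [hcoeff, hP, mul_pow, PowerSeries.coeff_mul,
    Finset.Nat.sum_antidiagonal_eq_sum_range_succ_mk, Finset.mul_sum]
  refine Finset.sum_congr rfl ?_
  intro i hi
  rw [aux_coeff, aux_coeff]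
  have hin : i ≤ n := Nat.lt_succ_iff.mp (Finset.mem_range.mp hi)
  have h1' : (-1 : R) ^ i * (-u) ^ (n - i) = (-1 : R) ^ n * u ^ (n - i) := by
    rw [neg_pow u, ← mul_assoc, ← pow_add]
    congr 2
    omega
  calc (-(1:R)) ^ i * (l.choose i : R) * ((-u) ^ (n-i) * (l.choose (n-i) : R))
      = ((-1 : R) ^ i * (-u) ^ (n - i)) * ((l.choose i : R) * (l.choose (n-i) : R)) := by ring
    _ = (-1:R)^n * ((l.choose i : R) * (l.choose (n - i) : R) * u ^ (n - i)) := by rw [h1']; ring
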